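/- Let S be the kn×kn quaternionic matrix whose block form has identity blocks Iₙ in positions making it the 'top part' of the squared companion matrix (rows of shifted identities, with one zero block row, and bottom block row (−A₀, −A₁, …, −A_{k−2})). Then ‖S‖₂² ≤ (1/2)[1 + ξ₀ + √((1 + ξ₀)² − 4(‖A₀‖₂² + ‖A₁‖₂²))], where ξ₀ = Σ_{i=0}^{k−2} ‖Aᵢ‖₂². -/

import Mathlib

open scoped Matrix Quaternion BigOperators

noncomputable section

/-- Euclidean norm of a vector with entries in a normed ring (e.g. the quaternions). -/
def qVecNorm {R : Type*} [NormedRing R] {n : Type*} [Fintype n] (x : n → R) : ℝ :=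
  Real.sqrt (∑ i, ‖x i‖ ^ 2)

/-- Operator 2-norm (spectral norm) of a matrix over a normed ring. -/
def qSpecNorm {R : Type*} [NormedRing R] {m n : Type*} [Fintype m] [Fintype n]
    (A : Matrix m n R) : ℝ :=
  sSup {c : ℝ | ∃ x : n → R, x ≠ 0 ∧ c = qVecNorm (A.mulVec x) / qVecNorm x}

/-- `μ` is a right eigenvalue of the quaternionic matrix `A`. -/
def RightEig {n : Type*} [Fintype n] (A : Matrix n n ℍ[ℝ]) (μ : ℍ[ℝ]) : Prop :=
  ∃ x : n → ℍ[ℝ], x ≠ 0 ∧ A.mulVec x = fun i => x i * μ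

/-- Right spectral radius of a quaternionic matrix. -/
def rSpecRad {n : Type*} [Fintype n] (A : Matrix n n ℍ[ℝ]) : ℝ :=
  sSup {r : ℝ | ∃ μ : ℍ[ℝ], RightEig A μ ∧ r = ‖μ‖}

/-- Spectral radius of a real 2×2 matrix. -/
def realSpecRad (B : Matrix (Fin 2) (Fin 2) ℝ) : ℝ :=
  sSup {r : ℝ | ∃ μ ∈ spectrum ℝ B, r = |μ|}

namespace QAux

open scoped ENNReal

variable {n m : Type*} [Fintype n] [Fintype m]

lemma qVecNorm_nonneg (x : n → ℍ[ℝ]) : 0 ≤ qVecNorm x := Real.sqrt_nonneg _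

lemma qVecNorm_sq (x : n → ℍ[ℝ]) : qVecNorm x ^ 2 = ∑ i, ‖x i‖ ^ 2 :=
  Real.sq_sqrt (Finset.sum_nonneg fun _ _ => sq_nonneg _)

lemma qVecNorm_zero : qVecNorm (0 : n → ℍ[ℝ]) = 0 := by
  simp [qVecNorm]

lemma qVecNorm_pos {x : n → ℍ[ℝ]} (hx : x ≠ 0) : 0 < qVecNorm x := by
  rw [qVecNorm, Real.sqrt_pos]
  obtain ⟨i, hi⟩ := Function.ne_iff.mp hx
  exact Finset.sum_pos' (fun _ _ => sq_nonneg _)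
    ⟨i, Finset.mem_univ i, pow_pos (norm_pos_iff.mpr hi) 2⟩

lemma qVecNorm_eq_norm (x : n → ℍ[ℝ]) :
    qVecNorm x = ‖(WithLp.equiv 2 (n → ℍ[ℝ])).symm x‖ := by
  rw [PiLp.norm_eq_sum (p := 2) (by norm_num)]
  have h2 : ((2 : ℝ≥0∞).toReal) = (2 : ℝ) := by simp
  simp only [h2, WithLp.equiv_symm_apply, PiLp.toLp_apply]
  rw [qVecNorm, Real.sqrt_eq_rpow]
  congr 1
  refine Finset.sum_congr rfl fun i _ => ?_
  rw [← Real.rpow_natCast ‖x i‖ 2]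
  norm_num

lemma qVecNorm_sum_le {ι : Type*} (s : Finset ι) (g : ι → n → ℍ[ℝ]) :
    qVecNorm (fun r => ∑ j ∈ s, g j r) ≤ ∑ j ∈ s, qVecNorm (g j) := by
  simp only [qVecNorm_eq_norm]
  have heq : (WithLp.equiv 2 (n → ℍ[ℝ])).symm (fun r => ∑ j ∈ s, g j r)
      = ∑ j ∈ s, (WithLp.equiv 2 (n → ℍ[ℝ])).symm (g j) := by
    rw [WithLp.equiv_symm_apply, ← WithLp.toLp_sum, Finset.sum_fn]
  rw [heq]
  exact norm_sum_le _ _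

lemma qVecNorm_mulVec_le_frob (A : Matrix m n ℍ[ℝ]) (y : n → ℍ[ℝ]) :
    qVecNorm (A.mulVec y) ≤ Real.sqrt (∑ i, ∑ j, ‖A i j‖ ^ 2) * qVecNorm y := by
  have hstep : ∀ i, ‖A.mulVec y i‖ ^ 2 ≤ (∑ j, ‖A i j‖ ^ 2) * ∑ j, ‖y j‖ ^ 2 := by
    intro i
    have h1 : ‖A.mulVec y i‖ ≤ ∑ j, ‖A i j‖ * ‖y j‖ := by
      refine (norm_sum_le _ _).trans ?_
      exact Finset.sum_le_sum fun j _ => norm_mul_le _ _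
    have h2 : ‖A.mulVec y i‖ ^ 2 ≤ (∑ j, ‖A i j‖ * ‖y j‖) ^ 2 :=
      pow_le_pow_left₀ (norm_nonneg _) h1 2
    exact h2.trans (Finset.sum_mul_sq_le_sq_mul_sq _ _ _)
  rw [qVecNorm, qVecNorm, ← Real.sqrt_mul (Finset.sum_nonneg fun _ _ =>
    Finset.sum_nonneg fun _ _ => sq_nonneg _)]
  apply Real.sqrt_le_sqrt
  calc ∑ i, ‖A.mulVec y i‖ ^ 2 ≤ ∑ i, (∑ j, ‖A i j‖ ^ 2) * ∑ j, ‖y j‖ ^ 2 :=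
        Finset.sum_le_sum fun i _ => hstep i
    _ = (∑ i, ∑ j, ‖A i j‖ ^ 2) * ∑ j, ‖y j‖ ^ 2 := by rw [Finset.sum_mul]

lemma qSpecNorm_nonneg (A : Matrix m n ℍ[ℝ]) : 0 ≤ qSpecNorm A :=
  Real.sSup_nonneg fun c hc => by
    obtain ⟨x, hx, rfl⟩ := hc
    exact div_nonneg (qVecNorm_nonneg _) (qVecNorm_nonneg _)

lemma qVecNorm_mulVec_le (A : Matrix m n ℍ[ℝ]) (y : n → ℍ[ℝ]) :
    qVecNorm (A.mulVec y) ≤ qSpecNorm A * qVecNorm y := by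
  by_cases hy : y = 0
  · subst hy
    rw [Matrix.mulVec_zero]
    simpa [qVecNorm_zero] using mul_nonneg (qSpecNorm_nonneg A) (le_refl 0)
  · have hpos := qVecNorm_pos hy
    have hbdd : BddAbove {c : ℝ | ∃ x : n → ℍ[ℝ], x ≠ 0 ∧ c = qVecNorm (A.mulVec x) / qVecNorm x} := by
      refine ⟨Real.sqrt (∑ i, ∑ j, ‖A i j‖ ^ 2), ?_⟩
      rintro c ⟨x, hx, rfl⟩
      rw [div_le_iff₀ (qVecNorm_pos hx)]
      exact qVecNorm_mulVec_le_frob A x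
    have hmem : qVecNorm (A.mulVec y) / qVecNorm y ∈
        {c : ℝ | ∃ x : n → ℍ[ℝ], x ≠ 0 ∧ c = qVecNorm (A.mulVec x) / qVecNorm x} := ⟨y, hy, rfl⟩
    have := le_csSup hbdd hmem
    rw [div_le_iff₀ hpos] at this
    exact this



lemma key_ineq (α β σ2 τ2 : ℝ) (hα : 0 ≤ α) (hβ : 0 ≤ β) (hσ : 0 ≤ σ2) (hτ : 0 ≤ τ2) :
    τ2 + (Real.sqrt α * Real.sqrt σ2 + Real.sqrt β * Real.sqrt τ2) ^ 2 ≤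
      (1 / 2) * (1 + (α + β) + Real.sqrt ((1 + (α + β)) ^ 2 - 4 * α)) * (σ2 + τ2) := by
  obtain ⟨u, hu0, rfl⟩ : ∃ u, 0 ≤ u ∧ u ^ 2 = α :=
    ⟨Real.sqrt α, Real.sqrt_nonneg _, Real.sq_sqrt hα⟩
  obtain ⟨v, hv0, rfl⟩ : ∃ v, 0 ≤ v ∧ v ^ 2 = β :=
    ⟨Real.sqrt β, Real.sqrt_nonneg _, Real.sq_sqrt hβ⟩
  obtain ⟨σ, hσ0, rfl⟩ : ∃ σ, 0 ≤ σ ∧ σ ^ 2 = σ2 :=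
    ⟨Real.sqrt σ2, Real.sqrt_nonneg _, Real.sq_sqrt hσ⟩
  obtain ⟨τ, hτ0, rfl⟩ : ∃ τ, 0 ≤ τ ∧ τ ^ 2 = τ2 :=
    ⟨Real.sqrt τ2, Real.sqrt_nonneg _, Real.sq_sqrt hτ⟩
  rw [Real.sqrt_sq hu0, Real.sqrt_sq hv0, Real.sqrt_sq hσ0, Real.sqrt_sq hτ0]
  have harg : 0 ≤ (1 + (u ^ 2 + v ^ 2)) ^ 2 - 4 * u ^ 2 := by
    nlinarith [sq_nonneg (1 + v ^ 2 - u ^ 2), sq_nonneg (u * v)]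
  set D := Real.sqrt ((1 + (u ^ 2 + v ^ 2)) ^ 2 - 4 * u ^ 2) with hDdef
  have hD2 : D ^ 2 = (1 + (u ^ 2 + v ^ 2)) ^ 2 - 4 * u ^ 2 := Real.sq_sqrt harg
  have habs : |1 + v ^ 2 - u ^ 2| ≤ D := by
    rw [hDdef, ← Real.sqrt_sq_eq_abs]
    apply Real.sqrt_le_sqrt
    nlinarith [sq_nonneg (u * v)]
  have hp : 0 ≤ (1 / 2) * (1 + (u ^ 2 + v ^ 2) + D) - u ^ 2 := by
    have h1 := neg_abs_le (1 + v ^ 2 - u ^ 2)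
    linarith
  have hq : 0 ≤ (1 / 2) * (1 + (u ^ 2 + v ^ 2) + D) - 1 - v ^ 2 := by
    have h1 := le_abs_self (1 + v ^ 2 - u ^ 2)
    linarith
  have hpq : ((1 / 2) * (1 + (u ^ 2 + v ^ 2) + D) - u ^ 2) *
      ((1 / 2) * (1 + (u ^ 2 + v ^ 2) + D) - 1 - v ^ 2) = (u * v) ^ 2 := by
    linear_combination (1 / 4 : ℝ) * hD2
  have hspq : Real.sqrt ((1 / 2) * (1 + (u ^ 2 + v ^ 2) + D) - u ^ 2) *
      Real.sqrt ((1 / 2) * (1 + (u ^ 2 + v ^ 2) + D) - 1 - v ^ 2) = u * v := by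
    rw [← Real.sqrt_mul hp, hpq, Real.sqrt_sq (mul_nonneg hu0 hv0)]
  have expand : (Real.sqrt ((1 / 2) * (1 + (u ^ 2 + v ^ 2) + D) - u ^ 2) * σ -
        Real.sqrt ((1 / 2) * (1 + (u ^ 2 + v ^ 2) + D) - 1 - v ^ 2) * τ) ^ 2 =
      ((1 / 2) * (1 + (u ^ 2 + v ^ 2) + D) - u ^ 2) * σ ^ 2 - 2 * (u * v) * (σ * τ) +
        ((1 / 2) * (1 + (u ^ 2 + v ^ 2) + D) - 1 - v ^ 2) * τ ^ 2 := by
    linear_combination σ ^ 2 * Real.sq_sqrt hp + τ ^ 2 * Real.sq_sqrt hq -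
      (2 * σ * τ) * hspq
  nlinarith [expand ▸ sq_nonneg (Real.sqrt ((1 / 2) * (1 + (u ^ 2 + v ^ 2) + D) - u ^ 2) * σ -
      Real.sqrt ((1 / 2) * (1 + (u ^ 2 + v ^ 2) + D) - 1 - v ^ 2) * τ)]

end QAux

open QAux in
set_option maxHeartbeats 2000000 in
theorem specNorm_S_bound (k n : ℕ) (hk : 3 ≤ k)
    (A : ℕ → Matrix (Fin n) (Fin n) ℍ[ℝ]) :
    qSpecNorm (fun p q : Fin (k - 1) × Fin n =>
        if (p.1 : ℕ) + 2 = (q.1 : ℕ) then (if p.2 = q.2 then (1 : ℍ[ℝ]) else 0)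
        else if (p.1 : ℕ) = k - 2 then -(A (q.1 : ℕ)) p.2 q.2 else 0) ^ 2 ≤
      (1 / 2) * (1 + (∑ i ∈ Finset.range (k - 1), qSpecNorm (A i) ^ 2) +
        Real.sqrt ((1 + (∑ i ∈ Finset.range (k - 1), qSpecNorm (A i) ^ 2)) ^ 2 -
          4 * (qSpecNorm (A 0) ^ 2 + qSpecNorm (A 1) ^ 2))) := by
  obtain ⟨m, rfl⟩ : ∃ m, k = m + 3 := ⟨k - 3, by omega⟩
  simp only [show m + 3 - 1 = m + 2 from rfl, show m + 3 - 2 = m + 1 from rfl]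
  set S : Matrix (Fin (m + 2) × Fin n) (Fin (m + 2) × Fin n) ℍ[ℝ] := fun p q =>
    if (p.1 : ℕ) + 2 = (q.1 : ℕ) then (if p.2 = q.2 then (1 : ℍ[ℝ]) else 0)
    else if (p.1 : ℕ) = m + 1 then -(A (q.1 : ℕ)) p.2 q.2 else 0 with hS
  set ξ : ℝ := ∑ i ∈ Finset.range (m + 2), qSpecNorm (A i) ^ 2 with hξdef
  set α : ℝ := qSpecNorm (A 0) ^ 2 + qSpecNorm (A 1) ^ 2 with hαdef
  set L : ℝ := (1 / 2) * (1 + ξ + Real.sqrt ((1 + ξ) ^ 2 - 4 * α)) with hLdef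
  have hξ0 : 0 ≤ ξ := Finset.sum_nonneg fun _ _ => sq_nonneg _
  have hL0 : 0 ≤ L := by
    have := Real.sqrt_nonneg ((1 + ξ) ^ 2 - 4 * α)
    rw [hLdef]; linarith
  -- the key pointwise bound
  have key : ∀ x : Fin (m + 2) × Fin n → ℍ[ℝ],
      qVecNorm (S.mulVec x) ^ 2 ≤ L * qVecNorm x ^ 2 := by
    intro x
    set xb : Fin (m + 2) → Fin n → ℍ[ℝ] := fun j r => x (j, r) with hxb
    set s : Fin (m + 2) → ℝ := fun j => qVecNorm (xb j) with hsdef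
    have hs0 : ∀ j, 0 ≤ s j := fun j => qVecNorm_nonneg _
    set σ2 : ℝ := s 0 ^ 2 + s 1 ^ 2 with hσ2def
    set τ2 : ℝ := ∑ i : Fin m, s i.succ.succ ^ 2 with hτ2def
    set β : ℝ := ∑ i : Fin m, qSpecNorm (A ((i : ℕ) + 2)) ^ 2 with hβdef
    have hσ2 : 0 ≤ σ2 := by positivity
    have hτ2 : 0 ≤ τ2 := Finset.sum_nonneg fun _ _ => sq_nonneg _
    have hβ0 : 0 ≤ β := Finset.sum_nonneg fun _ _ => sq_nonneg _
    have hα0 : 0 ≤ α := by positivity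
    -- ξ = α + β
    have hxi : ξ = α + β := by
      rw [hξdef, Finset.sum_range_succ', Finset.sum_range_succ',
        hβdef, Fin.sum_univ_eq_sum_range (fun i => qSpecNorm (A (i + 2)) ^ 2) m, hαdef]
      ring
    -- total norm of x
    have hxsq : qVecNorm x ^ 2 = σ2 + τ2 := by
      rw [qVecNorm_sq, Fintype.sum_prod_type]
      have : ∀ j : Fin (m + 2), (∑ r, ‖x (j, r)‖ ^ 2) = s j ^ 2 := fun j =>
        (qVecNorm_sq (xb j)).symm
      rw [Finset.sum_congr rfl fun j _ => this j, Fin.sum_univ_succ, Fin.sum_univ_succ]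
      simp only [hσ2def, hτ2def, Fin.succ_zero_eq_one]
      ring
    -- rows of S.mulVec x
    have hrow_id : ∀ (i : Fin m) (r : Fin n),
        S.mulVec x (i.castSucc.castSucc, r) = x (i.succ.succ, r) := by
      intro i r
      have hentry : ∀ q : Fin (m + 2) × Fin n,
          S (i.castSucc.castSucc, r) q = if q = (i.succ.succ, r) then 1 else 0 := by
        rintro ⟨j, t⟩
        simp only [hS]
        by_cases hj : (i : ℕ) + 2 = (j : ℕ)
        · have hj' : j = i.succ.succ := by
            apply Fin.ext; simp [← hj]
          subst hj'
          by_cases ht : r = t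
          · subst ht; simp
          · simp [ht, Ne.symm ht, Prod.ext_iff]
        · have hne : (i : ℕ) ≠ m + 1 := by omega
          have hq : (j, t) ≠ (i.succ.succ, r) := by
            intro hcon
            apply hj
            rw [Prod.mk.injEq] at hcon
            rw [hcon.1]
            simp
          simp only [Fin.coe_castSucc, hj, if_neg, hne, if_false, hq]
      rw [Matrix.mulVec, dotProduct,
        Finset.sum_congr rfl fun q _ => by rw [hentry q]]
      simp
    have hrow_zero : ∀ r : Fin n, S.mulVec x ((Fin.last m).castSucc, r) = 0 := by
      intro r
      have hentry : ∀ q : Fin (m + 2) × Fin n, S ((Fin.last m).castSucc, r) q = 0 := by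
        rintro ⟨j, t⟩
        simp only [hS]
        have h1 : ¬((m : ℕ) + 2 = (j : ℕ)) := by have := j.isLt; omega
        have h2 : (m : ℕ) ≠ m + 1 := by omega
        simp [Fin.coe_castSucc, Fin.val_last, h1, h2]
      rw [Matrix.mulVec, dotProduct,
        Finset.sum_congr rfl fun q _ => by rw [hentry q]]
      simp
    have hrow_last : ∀ r : Fin n, S.mulVec x (Fin.last (m + 1), r) =
        -(∑ j : Fin (m + 2), (A (j : ℕ)).mulVec (xb j) r) := by
      intro r
      have hentry : ∀ q : Fin (m + 2) × Fin n,
          S (Fin.last (m + 1), r) q = -(A ((q.1 : ℕ))) r q.2 := by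
        rintro ⟨j, t⟩
        simp only [hS]
        have h1 : ¬((m + 1 : ℕ) + 2 = (j : ℕ)) := by have := j.isLt; omega
        simp [Fin.val_last, h1]
      rw [Matrix.mulVec, dotProduct,
        Finset.sum_congr rfl fun q _ => by rw [hentry q]]
      rw [Fintype.sum_prod_type]
      rw [← Finset.sum_neg_distrib]
      refine Finset.sum_congr rfl fun j _ => ?_
      rw [Matrix.mulVec, dotProduct, ← Finset.sum_neg_distrib]
      exact Finset.sum_congr rfl fun t _ => by simp [hxb]
    -- decompose the norm of S.mulVec x
    set w : Fin n → ℍ[ℝ] := fun r => ∑ j : Fin (m + 2), (A (j : ℕ)).mulVec (xb j) r with hw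
    have hSx : qVecNorm (S.mulVec x) ^ 2 = τ2 + qVecNorm w ^ 2 := by
      rw [qVecNorm_sq, Fintype.sum_prod_type, Fin.sum_univ_castSucc, Fin.sum_univ_castSucc]
      have t1 : ∀ i : Fin m, (∑ r, ‖S.mulVec x (i.castSucc.castSucc, r)‖ ^ 2) =
          s i.succ.succ ^ 2 := by
        intro i
        rw [Finset.sum_congr rfl fun r _ => by rw [hrow_id i r]]
        exact (qVecNorm_sq (xb i.succ.succ)).symm
      have t2 : (∑ r, ‖S.mulVec x ((Fin.last m).castSucc, r)‖ ^ 2) = 0 := by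
        rw [Finset.sum_congr rfl fun r _ => by rw [hrow_zero r]]
        simp
      have t3 : (∑ r, ‖S.mulVec x (Fin.last (m + 1), r)‖ ^ 2) = qVecNorm w ^ 2 := by
        rw [Finset.sum_congr rfl fun r _ => by rw [hrow_last r]]
        rw [qVecNorm_sq w]
        exact Finset.sum_congr rfl fun r _ => by rw [norm_neg]
      rw [Finset.sum_congr rfl fun i _ => t1 i, t2, t3, hτ2def]
      ring
    -- bound qVecNorm w
    have hwle : qVecNorm w ≤ ∑ j : Fin (m + 2), qSpecNorm (A (j : ℕ)) * s j := by
      have h1 : qVecNorm w ≤ ∑ j : Fin (m + 2), qVecNorm ((A (j : ℕ)).mulVec (xb j)) := by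
        rw [hw]
        apply qVecNorm_sum_le
      exact h1.trans (Finset.sum_le_sum fun j _ => qVecNorm_mulVec_le _ _)
    have hw0 : 0 ≤ qVecNorm w := qVecNorm_nonneg _
    -- Cauchy-Schwarz splitting
    have hQsplit : (∑ j : Fin (m + 2), qSpecNorm (A (j : ℕ)) * s j) =
        (qSpecNorm (A 0) * s 0 + qSpecNorm (A 1) * s 1) +
          ∑ i : Fin m, qSpecNorm (A ((i : ℕ) + 2)) * s i.succ.succ := by
      rw [Fin.sum_univ_succ, Fin.sum_univ_succ]
      simp only [Fin.succ_zero_eq_one, Fin.val_succ, Fin.val_zero, Fin.val_one]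
      rw [← add_assoc]
    have piece1 : qSpecNorm (A 0) * s 0 + qSpecNorm (A 1) * s 1 ≤
        Real.sqrt α * Real.sqrt σ2 := by
      rw [← Real.sqrt_mul hα0]
      apply Real.le_sqrt_of_sq_le
      rw [hαdef, hσ2def]
      nlinarith [sq_nonneg (qSpecNorm (A 0) * s 1 - qSpecNorm (A 1) * s 0)]
    have piece2 : (∑ i : Fin m, qSpecNorm (A ((i : ℕ) + 2)) * s i.succ.succ) ≤
        Real.sqrt β * Real.sqrt τ2 := by
      rw [← Real.sqrt_mul hβ0]
      apply Real.le_sqrt_of_sq_le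
      rw [hβdef, hτ2def]
      exact Finset.sum_mul_sq_le_sq_mul_sq _ _ _
    have hwle2 : qVecNorm w ≤ Real.sqrt α * Real.sqrt σ2 + Real.sqrt β * Real.sqrt τ2 := by
      refine hwle.trans ?_
      rw [hQsplit]
      exact add_le_add piece1 piece2
    have hwsq : qVecNorm w ^ 2 ≤
        (Real.sqrt α * Real.sqrt σ2 + Real.sqrt β * Real.sqrt τ2) ^ 2 :=
      pow_le_pow_left₀ hw0 hwle2 2
    rw [hSx, hxsq]
    calc τ2 + qVecNorm w ^ 2
        ≤ τ2 + (Real.sqrt α * Real.sqrt σ2 + Real.sqrt β * Real.sqrt τ2) ^ 2 := by linarith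
      _ ≤ (1 / 2) * (1 + (α + β) + Real.sqrt ((1 + (α + β)) ^ 2 - 4 * α)) * (σ2 + τ2) :=
          key_ineq α β σ2 τ2 hα0 hβ0 hσ2 hτ2
      _ = L * (σ2 + τ2) := by rw [hLdef, hxi]
  -- conclude
  have hspec_le : qSpecNorm S ≤ Real.sqrt L := by
    apply Real.sSup_le _ (Real.sqrt_nonneg _)
    rintro c ⟨x, hx, rfl⟩
    have hxpos : 0 < qVecNorm x := qVecNorm_pos hx
    rw [div_le_iff₀ hxpos]
    have h2 : qVecNorm (S.mulVec x) ^ 2 ≤ (Real.sqrt L * qVecNorm x) ^ 2 := by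
      rw [mul_pow, Real.sq_sqrt hL0]
      exact key x
    calc qVecNorm (S.mulVec x)
        = Real.sqrt (qVecNorm (S.mulVec x) ^ 2) :=
          (Real.sqrt_sq (qVecNorm_nonneg _)).symm
      _ ≤ Real.sqrt ((Real.sqrt L * qVecNorm x) ^ 2) := Real.sqrt_le_sqrt h2
      _ = Real.sqrt L * qVecNorm x := Real.sqrt_sq (by positivity)
  calc qSpecNorm S ^ 2 ≤ Real.sqrt L ^ 2 :=
        pow_le_pow_left₀ (qSpecNorm_nonneg S) hspec_le 2
    _ = L := Real.sq_sqrt hL0
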